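/- Under the hypotheses of the integrability theorem (F: Δ → B(K,H) satisfying the Lipschitz conditions with constants γ₁, γ₂ on Δ = [a,b)×[c,d)), the operator Stieltjes integral satisfies the norm bound ‖∫_Δ F(λ,μ) dE(λ,μ)‖ ≤ 4 sup_{(λ,μ)∈Δ} ‖F(λ,μ)‖ + 2γ₁(b-a+d-c) + γ₂(b-a)(d-c). -/

import Mathlib

open Set Complex Filter
open scoped InnerProductSpace Topology Classical

noncomputable section

variable {H K : Type*}
  [NormedAddCommGroup H] [InnerProductSpace ℂ H] [CompleteSpace H]
  [NormedAddCommGroup K] [InnerProductSpace ℂ K] [CompleteSpace K]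

/-- A projection-valued (spectral) measure on the Borel subsets of `ℂ`,
acting on the Hilbert space `K`. -/
structure SpectralMeasure (K : Type*) [NormedAddCommGroup K] [InnerProductSpace ℂ K]
    [CompleteSpace K] where
  proj : Set ℂ → K →L[ℂ] K
  selfAdjoint : ∀ {Ω : Set ℂ}, MeasurableSet Ω → IsSelfAdjoint (proj Ω)
  mul_inter : ∀ {Ω Ω' : Set ℂ}, MeasurableSet Ω → MeasurableSet Ω' →
    proj (Ω ∩ Ω') = (proj Ω).comp (proj Ω')
  add_union : ∀ {Ω Ω' : Set ℂ}, MeasurableSet Ω → MeasurableSet Ω' → Disjoint Ω Ω' →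
    proj (Ω ∪ Ω') = proj Ω + proj Ω'
  proj_univ : proj Set.univ = 1

/-- The spectral function `Ê(λ,μ) = E({x+iy : x < λ, y < μ})`. -/
def SpectralMeasure.hatE (E : SpectralMeasure K) (l m : ℝ) : K →L[ℂ] K :=
  E.proj {z : ℂ | z.re < l ∧ z.im < m}

/-- The half-open rectangle `[l,l') × i[m,m')` in `ℂ`. -/
def rectC (l l' m m' : ℝ) : Set ℂ :=
  {z : ℂ | l ≤ z.re ∧ z.re < l' ∧ m ≤ z.im ∧ z.im < m'}

/-- A tagged partition of the half-open interval `[a,b)` into half-open subintervals,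
with a sample point (tag) in each subinterval. -/
structure TaggedPartition (a b : ℝ) where
  n : ℕ
  npos : 0 < n
  pts : ℕ → ℝ
  tags : ℕ → ℝ
  mono : ∀ i < n, pts i < pts (i + 1)
  first : pts 0 = a
  last : pts n = b
  tag_mem : ∀ i < n, pts i ≤ tags i ∧ tags i < pts (i + 1)

/-- The mesh (maximal subinterval length) of a tagged partition. -/
def TaggedPartition.mesh {a b : ℝ} (P : TaggedPartition a b) : ℝ :=
  sSup {r : ℝ | ∃ i < P.n, r = P.pts (i + 1) - P.pts i}

/-- The Riemann–Stieltjes sum `Σ_j Σ_k F(ξ_j,ζ_k) E(δ_j × ω_k)` for the right integral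
`∫ F dE` over the rectangle `[a,b) × [c,d)`. -/
def rightSum (E : SpectralMeasure K) (F : ℝ → ℝ → (K →L[ℂ] H))
    {a b c d : ℝ} (P : TaggedPartition a b) (Q : TaggedPartition c d) : K →L[ℂ] H :=
  ∑ j ∈ Finset.range P.n, ∑ k ∈ Finset.range Q.n,
    (F (P.tags j) (Q.tags k)).comp
      (E.proj (rectC (P.pts j) (P.pts (j + 1)) (Q.pts k) (Q.pts (k + 1))))

/-- The Riemann–Stieltjes sum `Σ_j Σ_k E(δ_j × ω_k) G(ξ_j,ζ_k)` for the left integral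
`∫ dE G` over the rectangle `[a,b) × [c,d)`. -/
def leftSum (E : SpectralMeasure K) (G : ℝ → ℝ → (H →L[ℂ] K))
    {a b c d : ℝ} (P : TaggedPartition a b) (Q : TaggedPartition c d) : H →L[ℂ] K :=
  ∑ j ∈ Finset.range P.n, ∑ k ∈ Finset.range Q.n,
    (E.proj (rectC (P.pts j) (P.pts (j + 1)) (Q.pts k) (Q.pts (k + 1)))).comp
      (G (P.tags j) (Q.tags k))

/-- `F` is right-integrable w.r.t. `dE` on `[a,b) × [c,d)` in the uniform operator
topology, with integral `J`. -/
def HasRightIntegralUnif (E : SpectralMeasure K) (F : ℝ → ℝ → (K →L[ℂ] H))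
    (a b c d : ℝ) (J : K →L[ℂ] H) : Prop :=
  ∀ ε > 0, ∃ δ > 0, ∀ (P : TaggedPartition a b) (Q : TaggedPartition c d),
    P.mesh < δ → Q.mesh < δ → ‖rightSum E F P Q - J‖ < ε

/-- `F` is right-integrable in the strong operator topology. -/
def HasRightIntegralStrong (E : SpectralMeasure K) (F : ℝ → ℝ → (K →L[ℂ] H))
    (a b c d : ℝ) (J : K →L[ℂ] H) : Prop :=
  ∀ x : K, ∀ ε > 0, ∃ δ > 0, ∀ (P : TaggedPartition a b) (Q : TaggedPartition c d),
    P.mesh < δ → Q.mesh < δ → ‖rightSum E F P Q x - J x‖ < ε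

/-- `F` is right-integrable in the weak operator topology. -/
def HasRightIntegralWeak (E : SpectralMeasure K) (F : ℝ → ℝ → (K →L[ℂ] H))
    (a b c d : ℝ) (J : K →L[ℂ] H) : Prop :=
  ∀ (x : K) (y : H), ∀ ε > 0, ∃ δ > 0, ∀ (P : TaggedPartition a b) (Q : TaggedPartition c d),
    P.mesh < δ → Q.mesh < δ → ‖⟪y, rightSum E F P Q x - J x⟫_ℂ‖ < ε

/-- `G` is left-integrable w.r.t. `dE` on `[a,b) × [c,d)` in the uniform operator
topology, with integral `J`. -/
def HasLeftIntegralUnif (E : SpectralMeasure K) (G : ℝ → ℝ → (H →L[ℂ] K))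
    (a b c d : ℝ) (J : H →L[ℂ] K) : Prop :=
  ∀ ε > 0, ∃ δ > 0, ∀ (P : TaggedPartition a b) (Q : TaggedPartition c d),
    P.mesh < δ → Q.mesh < δ → ‖leftSum E G P Q - J‖ < ε

/-- `G` is left-integrable in the strong operator topology. -/
def HasLeftIntegralStrong (E : SpectralMeasure K) (G : ℝ → ℝ → (H →L[ℂ] K))
    (a b c d : ℝ) (J : H →L[ℂ] K) : Prop :=
  ∀ x : H, ∀ ε > 0, ∃ δ > 0, ∀ (P : TaggedPartition a b) (Q : TaggedPartition c d),
    P.mesh < δ → Q.mesh < δ → ‖leftSum E G P Q x - J x‖ < ε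

/-- `G` is left-integrable in the weak operator topology. -/
def HasLeftIntegralWeak (E : SpectralMeasure K) (G : ℝ → ℝ → (H →L[ℂ] K))
    (a b c d : ℝ) (J : H →L[ℂ] K) : Prop :=
  ∀ (x : H) (y : K), ∀ ε > 0, ∃ δ > 0, ∀ (P : TaggedPartition a b) (Q : TaggedPartition c d),
    P.mesh < δ → Q.mesh < δ → ‖⟪y, leftSum E G P Q x - J x⟫_ℂ‖ < ε

/-- `E` is the spectral measure of the (possibly unbounded) normal operator `C`:
on the range of any spectral projection of a finite rectangle, `C` acts as the
operator Stieltjes integral `∫ z dE(z)`. -/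
def SpectralMeasure.Represents (E : SpectralMeasure K) (C : K →ₗ.[ℂ] K) : Prop :=
  ∀ a b c d : ℝ, a < b → c < d → ∀ T : K →L[ℂ] K,
    HasLeftIntegralUnif E (fun l m => ((l : ℂ) + (m : ℂ) * Complex.I) • (1 : K →L[ℂ] K))
      a b c d T →
    ∀ x : K, ∃ h : E.proj (rectC a b c d) x ∈ C.domain,
      C ⟨E.proj (rectC a b c d) x, h⟩ = T x

/-- The support of a spectral measure; for the spectral measure of a normal
operator `C` this is `spec(C)`. -/
def specSupp (E : SpectralMeasure K) : Set ℂ :=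
  {z : ℂ | ∀ ε > 0, E.proj (Metric.ball z ε) ≠ 0}

/-- The set of finite sums `Σ_k ‖Y* E(Ω_k) Y‖` over finite systems of mutually
disjoint Borel subsets of `ℂ`. -/
def EnormSet (E : SpectralMeasure K) (Y : H →L[ℂ] K) : Set ℝ :=
  {r : ℝ | ∃ (n : ℕ) (Ω : ℕ → Set ℂ), (∀ i, MeasurableSet (Ω i)) ∧
    (∀ i < n, ∀ j < n, i ≠ j → Disjoint (Ω i) (Ω j)) ∧
    r = ∑ i ∈ Finset.range n,
      ‖(ContinuousLinearMap.adjoint Y).comp ((E.proj (Ω i)).comp Y)‖}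

/-- The norm `‖Y‖_E` of `Y` with respect to the spectral measure `E`. -/
def Enorm (E : SpectralMeasure K) (Y : H →L[ℂ] K) : ℝ :=
  Real.sqrt (sSup (EnormSet E Y))

/-- `R` is the (bounded, everywhere defined) resolvent `(A - ζ)⁻¹` of the possibly
unbounded operator `A` at the point `ζ`. -/
def IsResolventAt (A : H →ₗ.[ℂ] H) (ζ : ℂ) (R : H →L[ℂ] H) : Prop :=
  ∃ hmem : ∀ x : H, R x ∈ A.domain,
    (∀ x : H, A ⟨R x, hmem x⟩ - ζ • R x = x) ∧
    (∀ f : A.domain, R (A f - ζ • (f : H)) = f)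

/-- The resolvent set of a possibly unbounded operator. -/
def pmResolventSet (A : H →ₗ.[ℂ] H) : Set ℂ := {ζ : ℂ | ∃ R, IsResolventAt A ζ R}

/-- The spectrum of a possibly unbounded operator. -/
def pmSpectrum (A : H →ₗ.[ℂ] H) : Set ℂ := (pmResolventSet A)ᶜ

/-- The numerical range `W(A) = {⟨Ax,x⟩ : x ∈ Dom(A), ‖x‖ = 1}`. -/
def numRange (A : H →ₗ.[ℂ] H) : Set ℂ :=
  {z : ℂ | ∃ f : A.domain, ‖(f : H)‖ = 1 ∧ z = ⟪(f : H), A f⟫_ℂ}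

/-- `X` is a weak solution of the Sylvester equation `XA - CX = D`. -/
def IsWeakSolutionSylvester (A : H →ₗ.[ℂ] H) (C : K →ₗ.[ℂ] K) (D X : H →L[ℂ] K) : Prop :=
  ∀ (f : A.domain) (g : C.adjoint.domain),
    ⟪(g : K), X (A f)⟫_ℂ - ⟪C.adjoint g, X (f : H)⟫_ℂ = ⟪(g : K), D (f : H)⟫_ℂ

/-- `X` is a strong solution of the Sylvester equation `XA - CX = D`. -/
def IsStrongSolutionSylvester (A : H →ₗ.[ℂ] H) (C : K →ₗ.[ℂ] K) (D X : H →L[ℂ] K) : Prop :=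
  ∀ f : A.domain, ∃ h : X (f : H) ∈ C.domain,
    X (A f) - C ⟨X (f : H), h⟩ = D (f : H)

/-- `X` is a weak solution of the Riccati equation `XA - CX + XBX = D`. -/
def IsWeakSolutionRiccati (A : H →ₗ.[ℂ] H) (C : K →ₗ.[ℂ] K) (B : K →L[ℂ] H)
    (D X : H →L[ℂ] K) : Prop :=
  ∀ (f : A.domain) (g : C.adjoint.domain),
    ⟪(g : K), X (A f)⟫_ℂ - ⟪C.adjoint g, X (f : H)⟫_ℂ
      + ⟪(g : K), X (B (X (f : H)))⟫_ℂ = ⟪(g : K), D (f : H)⟫_ℂ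

/-- `X` is a strong solution of the Riccati equation `XA - CX + XBX = D`. -/
def IsStrongSolutionRiccati (A : H →ₗ.[ℂ] H) (C : K →ₗ.[ℂ] K) (B : K →L[ℂ] H)
    (D X : H →L[ℂ] K) : Prop :=
  ∀ f : A.domain, ∃ h : X (f : H) ∈ C.domain,
    X (A f) - C ⟨X (f : H), h⟩ + X (B (X (f : H))) = D (f : H)

/-- The Riemann–Stieltjes sum for the left integral `∫_{spec(C) ∩ Ω} dE(ζ) G(ζ)`:
only partition rectangles meeting the spectrum contribute, with tags `tag j k`
chosen per rectangle. -/
def specLeftSum (E : SpectralMeasure K) (G : ℂ → (H →L[ℂ] K))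
    {a b c d : ℝ} (P : TaggedPartition a b) (Q : TaggedPartition c d)
    (tag : ℕ → ℕ → ℂ) : H →L[ℂ] K :=
  ∑ j ∈ Finset.range P.n, ∑ k ∈ Finset.range Q.n,
    if (rectC (P.pts j) (P.pts (j + 1)) (Q.pts k) (Q.pts (k + 1)) ∩ specSupp E).Nonempty
    then (E.proj (rectC (P.pts j) (P.pts (j + 1)) (Q.pts k) (Q.pts (k + 1)))).comp
      (G (tag j k))
    else 0

/-- Admissible tags for a spectral Riemann–Stieltjes sum: whenever a partition
rectangle meets the spectrum, the tag is taken in the intersection. -/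
def ValidTags (E : SpectralMeasure K) {a b c d : ℝ}
    (P : TaggedPartition a b) (Q : TaggedPartition c d) (tag : ℕ → ℕ → ℂ) : Prop :=
  ∀ j < P.n, ∀ k < Q.n,
    (rectC (P.pts j) (P.pts (j + 1)) (Q.pts k) (Q.pts (k + 1)) ∩ specSupp E).Nonempty →
    tag j k ∈ rectC (P.pts j) (P.pts (j + 1)) (Q.pts k) (Q.pts (k + 1)) ∩ specSupp E

/-- Convergence of `∫_{spec(C) ∩ ([a,b)×i[c,d))} dE(ζ) G(ζ)` in the strong operator
topology. -/
def HasSpecLeftIntegralStrong (E : SpectralMeasure K) (G : ℂ → (H →L[ℂ] K))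
    (a b c d : ℝ) (J : H →L[ℂ] K) : Prop :=
  ∀ x : H, ∀ ε > 0, ∃ δ > 0, ∀ (P : TaggedPartition a b) (Q : TaggedPartition c d)
    (tag : ℕ → ℕ → ℂ), ValidTags E P Q tag → P.mesh < δ → Q.mesh < δ →
    ‖specLeftSum E G P Q tag x - J x‖ < ε

/-- Convergence of `∫_{spec(C) ∩ ([a,b)×i[c,d))} dE(ζ) G(ζ)` in the uniform operator
topology. -/
def HasSpecLeftIntegralUnif (E : SpectralMeasure K) (G : ℂ → (H →L[ℂ] K))
    (a b c d : ℝ) (J : H →L[ℂ] K) : Prop :=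
  ∀ ε > 0, ∃ δ > 0, ∀ (P : TaggedPartition a b) (Q : TaggedPartition c d)
    (tag : ℕ → ℕ → ℂ), ValidTags E P Q tag → P.mesh < δ → Q.mesh < δ →
    ‖specLeftSum E G P Q tag - J‖ < ε

/-- The improper integral `∫_{spec(C)} dE(ζ) G(ζ)` in the strong operator topology:
the strong limit, over exhausting finite rectangles, of the integrals over
`spec(C) ∩ ([a,b) × i[c,d))`. -/
def HasImproperSpecLeftIntegralStrong (E : SpectralMeasure K) (G : ℂ → (H →L[ℂ] K))
    (J : H →L[ℂ] K) : Prop :=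
  ∃ Jr : ℝ → ℝ → ℝ → ℝ → (H →L[ℂ] K),
    (∀ a b c d : ℝ, a < b → c < d → HasSpecLeftIntegralStrong E G a b c d (Jr a b c d)) ∧
    ∀ x : H, ∀ ε > 0, ∃ R : ℝ, ∀ a b c d : ℝ, a ≤ -R → R ≤ b → c ≤ -R → R ≤ d →
      ‖Jr a b c d x - J x‖ < ε

/-- The improper integral `∫_{spec(C)} dE(ζ) G(ζ)` in the uniform operator topology. -/
def HasImproperSpecLeftIntegralUnif (E : SpectralMeasure K) (G : ℂ → (H →L[ℂ] K))
    (J : H →L[ℂ] K) : Prop :=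
  ∃ Jr : ℝ → ℝ → ℝ → ℝ → (H →L[ℂ] K),
    (∀ a b c d : ℝ, a < b → c < d → HasSpecLeftIntegralUnif E G a b c d (Jr a b c d)) ∧
    ∀ ε > 0, ∃ R : ℝ, ∀ a b c d : ℝ, a ≤ -R → R ≤ b → c ≤ -R → R ≤ d →
      ‖Jr a b c d - J‖ < ε

/-- The improper left integral `∫_{ℝ²} dE G` (uniform operator topology) as a limit
over exhausting finite rectangles. -/
def HasImproperLeftIntegralUnif (E : SpectralMeasure K) (G : ℝ → ℝ → (H →L[ℂ] K))
    (J : H →L[ℂ] K) : Prop :=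
  ∃ Jr : ℝ → ℝ → ℝ → ℝ → (H →L[ℂ] K),
    (∀ a b c d : ℝ, a < b → c < d → HasLeftIntegralUnif E G a b c d (Jr a b c d)) ∧
    ∀ ε > 0, ∃ R : ℝ, ∀ a b c d : ℝ, a ≤ -R → R ≤ b → c ≤ -R → R ≤ d →
      ‖Jr a b c d - J‖ < ε

section AuxHelpers

lemma measurableSet_rectC (l l' m m' : ℝ) : MeasurableSet (rectC l l' m m') := by
  have : rectC l l' m m' = (Complex.re ⁻¹' Ico l l') ∩ (Complex.im ⁻¹' Ico m m') := by
    ext z; simp only [rectC, Set.mem_setOf_eq, Set.mem_inter_iff, Set.mem_preimage,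
      Set.mem_Ico]; tauto
  rw [this]
  exact (Complex.measurable_re measurableSet_Ico).inter
    (Complex.measurable_im measurableSet_Ico)

lemma rectC_empty_right {l l' m m' : ℝ} (h : m' ≤ m) : rectC l l' m m' = ∅ := by
  ext z; simp only [rectC, Set.mem_setOf_eq, Set.mem_empty_iff_false, iff_false]
  rintro ⟨_, _, h1, h2⟩; linarith

lemma rectC_empty_left {l l' m m' : ℝ} (h : l' ≤ l) : rectC l l' m m' = ∅ := by
  ext z; simp only [rectC, Set.mem_setOf_eq, Set.mem_empty_iff_false, iff_false]
  rintro ⟨h1, h2, _, _⟩; linarith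

lemma SpectralMeasure.proj_empty (E : SpectralMeasure K) : E.proj ∅ = 0 := by
  have h : E.proj (∅ ∪ ∅ : Set ℂ) = E.proj ∅ + E.proj ∅ :=
    E.add_union MeasurableSet.empty MeasurableSet.empty (by simp)
  rw [Set.union_self] at h
  exact (left_eq_add.mp h)

lemma SpectralMeasure.norm_proj_le_one (E : SpectralMeasure K) {Ω : Set ℂ}
    (hΩ : MeasurableSet Ω) : ‖E.proj Ω‖ ≤ 1 := by
  have hP : E.proj Ω = (E.proj Ω).comp (E.proj Ω) := by
    simpa [Set.inter_self] using E.mul_inter hΩ hΩ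
  have hsa : ContinuousLinearMap.adjoint (E.proj Ω) = E.proj Ω :=
    (E.selfAdjoint hΩ).adjoint_eq
  have h2 : ‖(ContinuousLinearMap.adjoint (E.proj Ω)).comp (E.proj Ω)‖
      = ‖E.proj Ω‖ * ‖E.proj Ω‖ := ContinuousLinearMap.norm_adjoint_comp_self _
  rw [hsa, ← hP] at h2
  nlinarith [norm_nonneg (E.proj Ω)]

lemma SpectralMeasure.proj_rect_split_left (E : SpectralMeasure K) {u v w x y : ℝ}
    (h1 : u ≤ v) (h2 : v ≤ w) :
    E.proj (rectC u w x y) = E.proj (rectC u v x y) + E.proj (rectC v w x y) := by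
  have hdisj : Disjoint (rectC u v x y) (rectC v w x y) := by
    rw [Set.disjoint_left]; rintro z ⟨_, hz, _⟩ ⟨hz', _⟩; linarith
  have hunion : rectC u v x y ∪ rectC v w x y = rectC u w x y := by
    ext z
    simp only [rectC, Set.mem_union, Set.mem_setOf_eq]
    constructor
    · rintro (⟨ha, hb, hc⟩ | ⟨ha, hb, hc⟩) <;> exact ⟨by linarith, by linarith, hc⟩
    · rintro ⟨ha, hb, hc⟩
      rcases lt_or_ge z.re v with h | h
      · exact Or.inl ⟨ha, h, hc⟩
      · exact Or.inr ⟨h, hb, hc⟩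
  rw [← hunion, E.add_union (measurableSet_rectC _ _ _ _) (measurableSet_rectC _ _ _ _) hdisj]

lemma SpectralMeasure.proj_rect_split_bot (E : SpectralMeasure K) {u v x y z : ℝ}
    (h1 : x ≤ y) (h2 : y ≤ z) :
    E.proj (rectC u v x z) = E.proj (rectC u v x y) + E.proj (rectC u v y z) := by
  have hdisj : Disjoint (rectC u v x y) (rectC u v y z) := by
    rw [Set.disjoint_left]; rintro w ⟨_, _, _, hw⟩ ⟨_, _, hw', _⟩; linarith
  have hunion : rectC u v x y ∪ rectC u v y z = rectC u v x z := by
    ext w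
    simp only [rectC, Set.mem_union, Set.mem_setOf_eq]
    constructor
    · rintro (⟨ha, hb, hc, hd⟩ | ⟨ha, hb, hc, hd⟩) <;> exact ⟨ha, hb, by linarith, by linarith⟩
    · rintro ⟨ha, hb, hc, hd⟩
      rcases lt_or_ge w.im y with h | h
      · exact Or.inl ⟨ha, hb, hc, h⟩
      · exact Or.inr ⟨ha, hb, h, hd⟩
  rw [← hunion, E.add_union (measurableSet_rectC _ _ _ _) (measurableSet_rectC _ _ _ _) hdisj]

lemma abel_comp {X Y Z : Type*} [NormedAddCommGroup X] [NormedSpace ℂ X]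
    [NormedAddCommGroup Y] [NormedSpace ℂ Y] [NormedAddCommGroup Z] [NormedSpace ℂ Z]
    (f : ℕ → Y →L[ℂ] Z) (g : ℕ → X →L[ℂ] Y) (n : ℕ) :
    ∑ j ∈ Finset.range n, (f j).comp (g (j+1) - g j)
      = (f n).comp (g n) - (f 0).comp (g 0)
        - ∑ j ∈ Finset.range n, (f (j+1) - f j).comp (g (j+1)) := by
  have h : ∀ j, (f j).comp (g (j+1) - g j)
      = ((f (j+1)).comp (g (j+1)) - (f j).comp (g j)) - (f (j+1) - f j).comp (g (j+1)) := by
    intro j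
    simp only [ContinuousLinearMap.comp_sub, ContinuousLinearMap.sub_comp]
    abel
  rw [Finset.sum_congr rfl (fun j _ => h j), Finset.sum_sub_distrib,
    Finset.sum_range_sub (fun j => (f j).comp (g j))]

lemma TaggedPartition.pts_mono {a b : ℝ} (P : TaggedPartition a b) {i j : ℕ}
    (hij : i ≤ j) (hj : j ≤ P.n) : P.pts i ≤ P.pts j := by
  induction j with
  | zero => have : i = 0 := Nat.le_zero.mp hij; simp [this]
  | succ j ih =>
    rcases Nat.lt_or_ge i (j+1) with h | h
    · have h1 := ih (Nat.lt_succ_iff.mp h) (le_trans (Nat.le_succ j) hj)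
      have h2 := P.mono j (by omega)
      linarith
    · have : i = j + 1 := le_antisymm hij h
      simp [this]

lemma TaggedPartition.tags_mono {a b : ℝ} (P : TaggedPartition a b) {i j : ℕ}
    (hij : i ≤ j) (hj : j < P.n) : P.tags i ≤ P.tags j := by
  rcases eq_or_lt_of_le hij with rfl | h
  · exact le_rfl
  · have h1 := (P.tag_mem i (by omega)).2
    have h2 := (P.tag_mem j hj).1
    have h3 : P.pts (i+1) ≤ P.pts j := P.pts_mono h (le_of_lt hj)
    linarith

lemma TaggedPartition.tags_mem {a b : ℝ} (P : TaggedPartition a b) {i : ℕ}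
    (hi : i < P.n) : P.tags i ∈ Ico a b := by
  have h1 := (P.tag_mem i hi).1
  have h2 := (P.tag_mem i hi).2
  have h3 : P.pts 0 ≤ P.pts i := P.pts_mono (Nat.zero_le i) (le_of_lt hi)
  have h4 : P.pts (i+1) ≤ P.pts P.n := P.pts_mono hi (le_refl _)
  rw [P.first] at h3
  rw [P.last] at h4
  exact ⟨by linarith, by linarith⟩

def unifPart (a b : ℝ) (hab : a < b) (n : ℕ) (hn : 0 < n) : TaggedPartition a b where
  n := n
  npos := hn
  pts := fun i => a + i * ((b - a) / n)
  tags := fun i => a + i * ((b - a) / n)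
  mono := by
    intro i _
    have h : (0:ℝ) < (b - a) / n := div_pos (by linarith) (by exact_mod_cast hn)
    push_cast
    nlinarith
  first := by simp
  last := by
    have hn' : (n:ℝ) ≠ 0 := by exact_mod_cast hn.ne'
    field_simp
    ring
  tag_mem := by
    intro i hi
    refine ⟨le_rfl, ?_⟩
    have h : (0:ℝ) < (b - a) / n := div_pos (by linarith) (by exact_mod_cast hn)
    push_cast
    nlinarith

lemma unifPart_mesh (a b : ℝ) (hab : a < b) (n : ℕ) (hn : 0 < n) :
    (unifPart a b hab n hn).mesh = (b - a) / n := by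
  have hset : {r : ℝ | ∃ i < (unifPart a b hab n hn).n,
      r = (unifPart a b hab n hn).pts (i+1) - (unifPart a b hab n hn).pts i}
      = {(b - a) / n} := by
    ext r
    simp only [Set.mem_setOf_eq, Set.mem_singleton_iff, unifPart]
    constructor
    · rintro ⟨i, hi, rfl⟩; push_cast; ring
    · intro h; exact ⟨0, hn, by rw [h]; push_cast; ring⟩
  rw [TaggedPartition.mesh, hset, csSup_singleton]

lemma rightSum_norm_le (E : SpectralMeasure K) (F : ℝ → ℝ → (K →L[ℂ] H))
    {a b c d : ℝ} {γ₁ γ₂ M : ℝ} (hγ₁ : 0 ≤ γ₁) (hγ₂ : 0 ≤ γ₂)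
    (hLip : ∀ l ∈ Ico a b, ∀ l' ∈ Ico a b, ∀ m ∈ Ico c d, ∀ m' ∈ Ico c d,
      ‖F l m - F l' m'‖ ≤ γ₁ * (|l - l'| + |m - m'|))
    (hLip2 : ∀ l ∈ Ico a b, ∀ l' ∈ Ico a b, ∀ m ∈ Ico c d, ∀ m' ∈ Ico c d,
      ‖F l m - F l' m - F l m' + F l' m'‖ ≤ γ₂ * |l - l'| * |m - m'|)
    (hM : ∀ l ∈ Ico a b, ∀ m ∈ Ico c d, ‖F l m‖ ≤ M)
    (P : TaggedPartition a b) (Q : TaggedPartition c d) :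
    ‖rightSum E F P Q‖ ≤ M + γ₁ * (b - a) + γ₁ * (d - c) + γ₂ * (b - a) * (d - c) := by
  classical
  have hnpos := P.npos
  have hmpos := Q.npos
  set n := P.n with hn
  set m := Q.n with hm
  set ξ : ℕ → ℝ := fun j => P.tags (min j (n - 1)) with hξdef
  set ζ : ℕ → ℝ := fun k => Q.tags (min k (m - 1)) with hζdef
  have hξeq : ∀ j < n, ξ j = P.tags j := fun j hj => by
    simp only [hξdef]; rw [Nat.min_eq_left (by omega)]
  have hζeq : ∀ k < m, ζ k = Q.tags k := fun k hk => by
    simp only [hζdef]; rw [Nat.min_eq_left (by omega)]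
  have hξmem : ∀ j, ξ j ∈ Ico a b := fun j => P.tags_mem (by omega : min j (n-1) < n)
  have hζmem : ∀ k, ζ k ∈ Ico c d := fun k => Q.tags_mem (by omega : min k (m-1) < m)
  have hξmono : ∀ j, ξ j ≤ ξ (j+1) := fun j =>
    P.tags_mono (by omega : min j (n-1) ≤ min (j+1) (n-1)) (by omega)
  have hζmono : ∀ k, ζ k ≤ ζ (k+1) := fun k =>
    Q.tags_mono (by omega : min k (m-1) ≤ min (k+1) (m-1)) (by omega)
  set Qm : ℕ → ℕ → (K →L[ℂ] K) := fun j k => E.proj (rectC a (P.pts j) c (Q.pts k))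
    with hQmdef
  set Rc : ℕ → ℕ → (K →L[ℂ] K) :=
    fun j k => E.proj (rectC (P.pts j) (P.pts (j+1)) c (Q.pts k)) with hRcdef
  have hQnorm : ∀ j k, ‖Qm j k‖ ≤ 1 := fun j k =>
    E.norm_proj_le_one (measurableSet_rectC _ _ _ _)
  have hcomp : ∀ (X : K →L[ℂ] H) (j k : ℕ), ‖X.comp (Qm j k)‖ ≤ ‖X‖ := fun X j k =>
    le_trans (ContinuousLinearMap.opNorm_comp_le _ _)
      (mul_le_of_le_one_right (norm_nonneg X) (hQnorm j k))
  have key1 : ∀ j < n, ∀ k, Rc j k = Qm (j+1) k - Qm j k := by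
    intro j hj k
    have h1 : a ≤ P.pts j := by
      have := P.pts_mono (Nat.zero_le j) (le_of_lt hj); rwa [P.first] at this
    have h2 : P.pts j ≤ P.pts (j+1) := le_of_lt (P.mono j hj)
    have hs := E.proj_rect_split_left (x := c) (y := Q.pts k) h1 h2
    simp only [hQmdef, hRcdef]
    rw [hs]; abel
  have key2 : ∀ j < n, ∀ k < m,
      E.proj (rectC (P.pts j) (P.pts (j+1)) (Q.pts k) (Q.pts (k+1))) = Rc j (k+1) - Rc j k := by
    intro j hj k hk
    have h1 : c ≤ Q.pts k := by
      have := Q.pts_mono (Nat.zero_le k) (le_of_lt hk); rwa [Q.first] at this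
    have h2 : Q.pts k ≤ Q.pts (k+1) := le_of_lt (Q.mono k hk)
    have hs := E.proj_rect_split_bot (u := P.pts j) (v := P.pts (j+1)) h1 h2
    simp only [hRcdef]
    rw [hs]; abel
  have hRc0 : ∀ j, Rc j 0 = 0 := by
    intro j
    simp only [hRcdef]
    rw [Q.first, rectC_empty_right le_rfl, E.proj_empty]
  have hQm0 : ∀ k, Qm 0 k = 0 := by
    intro k
    simp only [hQmdef]
    rw [P.first, rectC_empty_left le_rfl, E.proj_empty]
  -- Step 1: rewrite the Riemann sum
  have hstep1 : rightSum E F P Q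
      = ∑ j ∈ Finset.range n, ∑ k ∈ Finset.range m,
          (F (ξ j) (ζ k)).comp (Rc j (k+1) - Rc j k) := by
    simp only [rightSum]
    refine Finset.sum_congr rfl fun j hj => Finset.sum_congr rfl fun k hk => ?_
    rw [Finset.mem_range] at hj hk
    rw [hξeq j hj, hζeq k hk, key2 j hj k hk]
  -- Step 2: Abel summation in k
  have hstep2 : ∀ j, ∑ k ∈ Finset.range m, (F (ξ j) (ζ k)).comp (Rc j (k+1) - Rc j k)
      = (F (ξ j) (ζ m)).comp (Rc j m)
        - ∑ k ∈ Finset.range m, (F (ξ j) (ζ (k+1)) - F (ξ j) (ζ k)).comp (Rc j (k+1)) := by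
    intro j
    rw [abel_comp (fun k => F (ξ j) (ζ k)) (fun k => Rc j k) m, hRc0 j]
    simp
  have hstep3 : rightSum E F P Q
      = (∑ j ∈ Finset.range n, (F (ξ j) (ζ m)).comp (Rc j m))
        - ∑ j ∈ Finset.range n, ∑ k ∈ Finset.range m,
            (F (ξ j) (ζ (k+1)) - F (ξ j) (ζ k)).comp (Rc j (k+1)) := by
    rw [hstep1, Finset.sum_congr rfl (fun j _ => hstep2 j), Finset.sum_sub_distrib]
  -- Abel summation in j for the boundary term
  have hA : ∑ j ∈ Finset.range n, (F (ξ j) (ζ m)).comp (Rc j m)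
      = (F (ξ n) (ζ m)).comp (Qm n m)
        - ∑ j ∈ Finset.range n, (F (ξ (j+1)) (ζ m) - F (ξ j) (ζ m)).comp (Qm (j+1) m) := by
    have h1 : ∀ j ∈ Finset.range n, (F (ξ j) (ζ m)).comp (Rc j m)
        = (F (ξ j) (ζ m)).comp (Qm (j+1) m - Qm j m) := by
      intro j hj; rw [Finset.mem_range] at hj; rw [key1 j hj m]
    rw [Finset.sum_congr rfl h1,
      abel_comp (fun j => F (ξ j) (ζ m)) (fun j => Qm j m) n, hQm0 m]
    simp
  -- Abel summation in j for the k-difference terms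
  have hB : ∀ k, ∑ j ∈ Finset.range n,
        (F (ξ j) (ζ (k+1)) - F (ξ j) (ζ k)).comp (Rc j (k+1))
      = (F (ξ n) (ζ (k+1)) - F (ξ n) (ζ k)).comp (Qm n (k+1))
        - ∑ j ∈ Finset.range n,
            ((F (ξ (j+1)) (ζ (k+1)) - F (ξ (j+1)) (ζ k))
              - (F (ξ j) (ζ (k+1)) - F (ξ j) (ζ k))).comp (Qm (j+1) (k+1)) := by
    intro k
    have h1 : ∀ j ∈ Finset.range n,
        (F (ξ j) (ζ (k+1)) - F (ξ j) (ζ k)).comp (Rc j (k+1))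
        = (F (ξ j) (ζ (k+1)) - F (ξ j) (ζ k)).comp (Qm (j+1) (k+1) - Qm j (k+1)) := by
      intro j hj; rw [Finset.mem_range] at hj; rw [key1 j hj (k+1)]
    rw [Finset.sum_congr rfl h1,
      abel_comp (fun j => F (ξ j) (ζ (k+1)) - F (ξ j) (ζ k)) (fun j => Qm j (k+1)) n,
      hQm0 (k+1)]
    simp
  have hfinal : rightSum E F P Q
      = (F (ξ n) (ζ m)).comp (Qm n m)
        - ∑ j ∈ Finset.range n, (F (ξ (j+1)) (ζ m) - F (ξ j) (ζ m)).comp (Qm (j+1) m)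
        - ((∑ k ∈ Finset.range m,
              (F (ξ n) (ζ (k+1)) - F (ξ n) (ζ k)).comp (Qm n (k+1)))
           - ∑ k ∈ Finset.range m, ∑ j ∈ Finset.range n,
              ((F (ξ (j+1)) (ζ (k+1)) - F (ξ (j+1)) (ζ k))
                - (F (ξ j) (ζ (k+1)) - F (ξ j) (ζ k))).comp (Qm (j+1) (k+1))) := by
    rw [hstep3, hA, Finset.sum_comm, Finset.sum_congr rfl (fun k _ => hB k),
      Finset.sum_sub_distrib]
  -- basic real estimates
  have hξ0n : ξ 0 ≤ ξ n := P.tags_mono (by omega) (by omega)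
  have hζ0m : ζ 0 ≤ ζ m := Q.tags_mono (by omega) (by omega)
  have hξba : ξ n - ξ 0 ≤ b - a := by
    have h1 := (hξmem n).2; have h2 := (hξmem 0).1; linarith
  have hζdc : ζ m - ζ 0 ≤ d - c := by
    have h1 := (hζmem m).2; have h2 := (hζmem 0).1; linarith
  -- norm bounds for the four pieces
  have hT1 : ‖(F (ξ n) (ζ m)).comp (Qm n m)‖ ≤ M :=
    le_trans (hcomp _ _ _) (hM _ (hξmem n) _ (hζmem m))
  have hT2 : ‖∑ j ∈ Finset.range n, (F (ξ (j+1)) (ζ m) - F (ξ j) (ζ m)).comp (Qm (j+1) m)‖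
      ≤ γ₁ * (b - a) := by
    calc ‖∑ j ∈ Finset.range n, (F (ξ (j+1)) (ζ m) - F (ξ j) (ζ m)).comp (Qm (j+1) m)‖
        ≤ ∑ j ∈ Finset.range n, ‖(F (ξ (j+1)) (ζ m) - F (ξ j) (ζ m)).comp (Qm (j+1) m)‖ :=
          norm_sum_le _ _
      _ ≤ ∑ j ∈ Finset.range n, γ₁ * (ξ (j+1) - ξ j) := by
          refine Finset.sum_le_sum fun j _ => ?_
          refine le_trans (hcomp _ _ _) ?_
          have h := hLip (ξ (j+1)) (hξmem _) (ξ j) (hξmem _) (ζ m) (hζmem _) (ζ m) (hζmem _)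
          rw [sub_self, abs_zero, add_zero, _root_.abs_of_nonneg (sub_nonneg.mpr (hξmono j))] at h
          exact h
      _ = γ₁ * (ξ n - ξ 0) := by rw [← Finset.mul_sum, Finset.sum_range_sub ξ n]
      _ ≤ γ₁ * (b - a) := mul_le_mul_of_nonneg_left hξba hγ₁
  have hS1 : ‖∑ k ∈ Finset.range m, (F (ξ n) (ζ (k+1)) - F (ξ n) (ζ k)).comp (Qm n (k+1))‖
      ≤ γ₁ * (d - c) := by
    calc ‖∑ k ∈ Finset.range m, (F (ξ n) (ζ (k+1)) - F (ξ n) (ζ k)).comp (Qm n (k+1))‖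
        ≤ ∑ k ∈ Finset.range m, ‖(F (ξ n) (ζ (k+1)) - F (ξ n) (ζ k)).comp (Qm n (k+1))‖ :=
          norm_sum_le _ _
      _ ≤ ∑ k ∈ Finset.range m, γ₁ * (ζ (k+1) - ζ k) := by
          refine Finset.sum_le_sum fun k _ => ?_
          refine le_trans (hcomp _ _ _) ?_
          have h := hLip (ξ n) (hξmem _) (ξ n) (hξmem _) (ζ (k+1)) (hζmem _) (ζ k) (hζmem _)
          rw [sub_self, abs_zero, zero_add, _root_.abs_of_nonneg (sub_nonneg.mpr (hζmono k))] at h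
          exact h
      _ = γ₁ * (ζ m - ζ 0) := by rw [← Finset.mul_sum, Finset.sum_range_sub ζ m]
      _ ≤ γ₁ * (d - c) := mul_le_mul_of_nonneg_left hζdc hγ₁
  have hS2 : ‖∑ k ∈ Finset.range m, ∑ j ∈ Finset.range n,
        ((F (ξ (j+1)) (ζ (k+1)) - F (ξ (j+1)) (ζ k))
          - (F (ξ j) (ζ (k+1)) - F (ξ j) (ζ k))).comp (Qm (j+1) (k+1))‖
      ≤ γ₂ * (b - a) * (d - c) := by
    calc ‖∑ k ∈ Finset.range m, ∑ j ∈ Finset.range n,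
          ((F (ξ (j+1)) (ζ (k+1)) - F (ξ (j+1)) (ζ k))
            - (F (ξ j) (ζ (k+1)) - F (ξ j) (ζ k))).comp (Qm (j+1) (k+1))‖
        ≤ ∑ k ∈ Finset.range m, ∑ j ∈ Finset.range n,
            ‖((F (ξ (j+1)) (ζ (k+1)) - F (ξ (j+1)) (ζ k))
              - (F (ξ j) (ζ (k+1)) - F (ξ j) (ζ k))).comp (Qm (j+1) (k+1))‖ :=
          le_trans (norm_sum_le _ _) (Finset.sum_le_sum fun k _ => norm_sum_le _ _)
      _ ≤ ∑ k ∈ Finset.range m, ∑ j ∈ Finset.range n,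
            γ₂ * (ξ (j+1) - ξ j) * (ζ (k+1) - ζ k) := by
          refine Finset.sum_le_sum fun k _ => Finset.sum_le_sum fun j _ => ?_
          refine le_trans (hcomp _ _ _) ?_
          have heq : (F (ξ (j+1)) (ζ (k+1)) - F (ξ (j+1)) (ζ k))
              - (F (ξ j) (ζ (k+1)) - F (ξ j) (ζ k))
              = F (ξ (j+1)) (ζ (k+1)) - F (ξ j) (ζ (k+1))
                - F (ξ (j+1)) (ζ k) + F (ξ j) (ζ k) := by abel
          rw [heq]
          have h := hLip2 (ξ (j+1)) (hξmem _) (ξ j) (hξmem _) (ζ (k+1)) (hζmem _)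
            (ζ k) (hζmem _)
          rw [_root_.abs_of_nonneg (sub_nonneg.mpr (hξmono j)),
            _root_.abs_of_nonneg (sub_nonneg.mpr (hζmono k))] at h
          exact h
      _ = γ₂ * (ξ n - ξ 0) * (ζ m - ζ 0) := by
          have hinner : ∀ k, ∑ j ∈ Finset.range n, γ₂ * (ξ (j+1) - ξ j) * (ζ (k+1) - ζ k)
              = γ₂ * (ξ n - ξ 0) * (ζ (k+1) - ζ k) := by
            intro k
            rw [← Finset.sum_mul, ← Finset.mul_sum, Finset.sum_range_sub ξ n]
          rw [Finset.sum_congr rfl (fun k _ => hinner k), ← Finset.mul_sum,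
            Finset.sum_range_sub ζ m]
      _ ≤ γ₂ * (b - a) * (d - c) := by
          have hba0 : (0:ℝ) ≤ b - a := by
            have h1 := (hξmem 0).1; have h2 := (hξmem 0).2; simp only [Set.mem_Ico] at *; linarith
          have hdc0 : (0:ℝ) ≤ d - c := by
            have h1 := (hζmem 0).1; have h2 := (hζmem 0).2; simp only [Set.mem_Ico] at *; linarith
          exact mul_le_mul (mul_le_mul_of_nonneg_left hξba hγ₂) hζdc (by linarith)
            (mul_nonneg hγ₂ hba0)
  rw [hfinal]
  have h1 := norm_sub_le ((F (ξ n) (ζ m)).comp (Qm n m) -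
    ∑ j ∈ Finset.range n, (F (ξ (j+1)) (ζ m) - F (ξ j) (ζ m)).comp (Qm (j+1) m))
    ((∑ k ∈ Finset.range m, (F (ξ n) (ζ (k+1)) - F (ξ n) (ζ k)).comp (Qm n (k+1)))
      - ∑ k ∈ Finset.range m, ∑ j ∈ Finset.range n,
          ((F (ξ (j+1)) (ζ (k+1)) - F (ξ (j+1)) (ζ k))
            - (F (ξ j) (ζ (k+1)) - F (ξ j) (ζ k))).comp (Qm (j+1) (k+1)))
  have h2 := norm_sub_le ((F (ξ n) (ζ m)).comp (Qm n m))
    (∑ j ∈ Finset.range n, (F (ξ (j+1)) (ζ m) - F (ξ j) (ζ m)).comp (Qm (j+1) m))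
  have h3 := norm_sub_le
    (∑ k ∈ Finset.range m, (F (ξ n) (ζ (k+1)) - F (ξ n) (ζ k)).comp (Qm n (k+1)))
    (∑ k ∈ Finset.range m, ∑ j ∈ Finset.range n,
        ((F (ξ (j+1)) (ζ (k+1)) - F (ξ (j+1)) (ζ k))
          - (F (ξ j) (ζ (k+1)) - F (ξ j) (ζ k))).comp (Qm (j+1) (k+1)))
  linarith

end AuxHelpers

/-- under the Lipschitz hypotheses, the operator Stieltjes integral
satisfies `‖∫_Δ F dE‖ ≤ 4 sup_Δ ‖F‖ + 2γ₁(b-a+d-c) + γ₂(b-a)(d-c)`. -/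
theorem rightIntegral_norm_bound (E : SpectralMeasure K) (F : ℝ → ℝ → (K →L[ℂ] H))
    {a b c d : ℝ} (hab : a < b) (hcd : c < d) {γ₁ γ₂ : ℝ} (hγ₁ : 0 < γ₁) (hγ₂ : 0 < γ₂)
    (hLip : ∀ l ∈ Ico a b, ∀ l' ∈ Ico a b, ∀ m ∈ Ico c d, ∀ m' ∈ Ico c d,
      ‖F l m - F l' m'‖ ≤ γ₁ * (|l - l'| + |m - m'|))
    (hLip2 : ∀ l ∈ Ico a b, ∀ l' ∈ Ico a b, ∀ m ∈ Ico c d, ∀ m' ∈ Ico c d,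
      ‖F l m - F l' m - F l m' + F l' m'‖ ≤ γ₂ * |l - l'| * |m - m'|)
    (J : K →L[ℂ] H) (hJ : HasRightIntegralUnif E F a b c d J) :
    ‖J‖ ≤ 4 * sSup {r : ℝ | ∃ l ∈ Ico a b, ∃ m ∈ Ico c d, r = ‖F l m‖}
      + 2 * γ₁ * (b - a + d - c) + γ₂ * (b - a) * (d - c) := by
  set S := {r : ℝ | ∃ l ∈ Ico a b, ∃ m ∈ Ico c d, r = ‖F l m‖} with hSdef
  have hac : a ∈ Ico a b := ⟨le_rfl, hab⟩
  have hcc : c ∈ Ico c d := ⟨le_rfl, hcd⟩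
  have hmem : ‖F a c‖ ∈ S := ⟨a, hac, c, hcc, rfl⟩
  have hbdd : BddAbove S := by
    refine ⟨‖F a c‖ + γ₁ * ((b - a) + (d - c)), ?_⟩
    rintro r ⟨l, hl, m, hm, rfl⟩
    have h := hLip l hl a hac m hm c hcc
    have h1 : |l - a| ≤ b - a := by
      rw [_root_.abs_of_nonneg (by linarith [hl.1])]; linarith [hl.2]
    have h2 : |m - c| ≤ d - c := by
      rw [_root_.abs_of_nonneg (by linarith [hm.1])]; linarith [hm.2]
    have h3 : ‖F l m‖ - ‖F a c‖ ≤ ‖F l m - F a c‖ := norm_sub_norm_le _ _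
    nlinarith
  have hM : ∀ l ∈ Ico a b, ∀ m ∈ Ico c d, ‖F l m‖ ≤ sSup S := fun l hl m hm =>
    le_csSup hbdd ⟨l, hl, m, hm, rfl⟩
  have hM0 : 0 ≤ sSup S := le_trans (norm_nonneg (F a c)) (le_csSup hbdd hmem)
  have key : ‖J‖ ≤ sSup S + γ₁ * (b - a) + γ₁ * (d - c) + γ₂ * (b - a) * (d - c) := by
    refine le_of_forall_pos_le_add fun ε hε => ?_
    obtain ⟨δ, hδ, hfine⟩ := hJ ε hε
    obtain ⟨N, hN⟩ := exists_nat_gt (max ((b - a) / δ) ((d - c) / δ))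
    have hbaδ : 0 < (b - a) / δ := div_pos (by linarith) hδ
    have hN0 : 0 < N := by
      exact_mod_cast lt_of_lt_of_le hbaδ (le_trans (le_max_left _ _) hN.le)
    have hNR : (0:ℝ) < N := by exact_mod_cast hN0
    have hPm : (b - a) / N < δ := by
      rw [div_lt_iff₀ hNR]
      have h := lt_of_le_of_lt (le_max_left ((b - a) / δ) ((d - c) / δ)) hN
      rw [div_lt_iff₀ hδ] at h
      linarith
    have hQm : (d - c) / N < δ := by
      rw [div_lt_iff₀ hNR]
      have h := lt_of_le_of_lt (le_max_right ((b - a) / δ) ((d - c) / δ)) hN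
      rw [div_lt_iff₀ hδ] at h
      linarith
    have h1 := hfine (unifPart a b hab N hN0) (unifPart c d hcd N hN0)
      (by rw [unifPart_mesh]; exact hPm) (by rw [unifPart_mesh]; exact hQm)
    have h2 := rightSum_norm_le E F hγ₁.le hγ₂.le hLip hLip2 hM
      (unifPart a b hab N hN0) (unifPart c d hcd N hN0)
    have h3 : ‖J‖ ≤ ‖rightSum E F (unifPart a b hab N hN0) (unifPart c d hcd N hN0)‖
        + ‖rightSum E F (unifPart a b hab N hN0) (unifPart c d hcd N hN0) - J‖ := by
      have := norm_sub_le (rightSum E F (unifPart a b hab N hN0) (unifPart c d hcd N hN0))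
        (rightSum E F (unifPart a b hab N hN0) (unifPart c d hcd N hN0) - J)
      simpa using this
    linarith
  have hfin : γ₁ * (b - a + d - c) ≥ 0 := by nlinarith
  linarith


end
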